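/- arXiv:2509.14185 — 2 statements merged into one kernel-verified Lean document; each statement's English description precedes it below -/
import Mathlib

section
/- For every integer k ≥ 1, the implicit Burgers profile U_k satisfies the self-similar Burgers profile equation with parameter λ = 1/(2k), i.e. -(1/(2k)) U_k(y) + ((1+1/(2k)) y + U_k(y)) U_k'(y) = 0 for every y ∈ ℝ. -/
/-- The implicit Burgers profile `U_k` (the function with
`U_k(y) + U_k(y)^(2k+1) = -y`) satisfies the self-similar Burgers profile equation with
parameter `λ = 1/(2k)`. -/
theorem implicit_burgers_profile_solves_selfSimilar_eq
    (k : ℕ) (hk : 1 ≤ k) (U : ℝ → ℝ)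
    (hU : ∀ y : ℝ, U y + U y ^ (2 * k + 1) = -y) :
    ∀ y : ℝ,
      -(1 / (2 * (k : ℝ))) * U y +
        ((1 + 1 / (2 * (k : ℝ))) * y + U y) * deriv U y = 0 := by
  -- h u = u + u^(2k+1) is a strictly monotone surjection
  set h : ℝ → ℝ := fun u => u + u ^ (2 * k + 1) with hh
  have hodd : Odd (2 * k + 1) := ⟨k, by ring⟩
  have hmono : StrictMono h := fun a b hab => by
    have := hodd.strictMono_pow (R := ℝ) hab
    simpa [hh] using add_lt_add hab this
  have hsurj : Function.Surjective h := fun x => ⟨U (-x), by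
    have := hU (-x); simpa [hh] using this⟩
  let e := StrictMono.orderIsoOfSurjective h hmono hsurj
  have hUy : ∀ y, U y = e.symm (-y) := fun y => by
    have : e (U y) = -y := by
      show (StrictMono.orderIsoOfSurjective h hmono hsurj : ℝ ≃o ℝ) (U y) = -y
      rw [show ((StrictMono.orderIsoOfSurjective h hmono hsurj : ℝ ≃o ℝ) (U y)) = h (U y) from
        congrFun (StrictMono.coe_orderIsoOfSurjective h hmono hsurj) (U y)]
      simpa [hh] using hU y
    have := congrArg e.symm this
    simpa using this
  have hUcont : Continuous U := by
    have : Continuous fun y : ℝ => e.symm (-y) :=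
      e.toHomeomorph.symm.continuous.comp continuous_neg
    exact (funext hUy ▸ this : Continuous U)
  intro y
  set u := U y with hu
  have hc : (0:ℝ) < 1 + ((2*k+1 : ℕ) : ℝ) * u ^ (2*k) := by
    have h1 : (0:ℝ) ≤ ((2*k+1 : ℕ) : ℝ) * u ^ (2*k) := by
      apply mul_nonneg (by positivity)
      have : u ^ (2*k) = (u^k)^2 := by rw [← pow_mul]; ring_nf
      rw [this]; positivity
    linarith
  have hfd : HasDerivAt (fun u : ℝ => -(u + u ^ (2*k+1)))
      (-(1 + ((2*k+1 : ℕ) : ℝ) * u ^ (2*k))) u := by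
    have := ((hasDerivAt_id u).add (hasDerivAt_pow (2*k+1) u)).neg
    exact this.congr_deriv (by simp)
  have hderiv : HasDerivAt U (-(1 + ((2*k+1 : ℕ) : ℝ) * u ^ (2*k)))⁻¹ y := by
    apply HasDerivAt.of_local_left_inverse (hUcont.continuousAt) hfd (by linarith)
    filter_upwards with z
    have := hU z
    simp only [neg_add_rev]
    linarith
  rw [hderiv.deriv]
  have hy : y = -(u + u ^ (2*k+1)) := by have := hU y; linarith
  rw [hy]
  set c : ℝ := 1 + ((2*k+1 : ℕ) : ℝ) * u ^ (2*k) with hcdef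
  have hk0 : (2 * (k:ℝ)) ≠ 0 := by
    have : (1:ℝ) ≤ (k:ℝ) := by exact_mod_cast hk
    positivity
  have hc' : c ≠ 0 := ne_of_gt hc
  have key : ((1 + 1 / (2 * (k : ℝ))) * (-(u + u ^ (2*k+1))) + u)
      = -(1 / (2 * (k:ℝ))) * u * c := by
    rw [hcdef]
    push_cast
    field_simp
    ring
  rw [key, inv_neg, mul_neg, mul_assoc, mul_inv_cancel₀ hc']
  ring
end

section
/- Let k ≥ 1 be an integer, λ = 1/(2k), and let U_k be the implicit Burgers profile. Define u(x,t) := (1-t)^λ · U_k((1-t)^{-(1+λ)} x) for x ∈ ℝ, t < 1. Then u solves the inviscid Burgers equation ∂_t u + u ∂_x u = 0 on ℝ × (-∞,1), satisfies the uniform bound |u(x,t)| ≤ |x|^{1/(2k+1)} for all x ∈ ℝ and t < 1, and its spatial gradient at the origin equals ∂_x u(0,t) = -(1-t)^{-1}, which tends to -∞ as t → 1⁻. In particular, u is a solution that stays bounded on compact spatial sets but whose gradient blows up in finite time. -/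
open Real Filter


lemma bg_mono (k : ℕ) : StrictMono (fun v : ℝ => v + v ^ (2*k+1)) :=
  strictMono_id.add (Odd.strictMono_pow ⟨k, by ring⟩)

lemma bg_surj (k : ℕ) : Function.Surjective (fun v : ℝ => v + v ^ (2*k+1)) := by
  intro c
  have hcont : Continuous (fun v : ℝ => v + v ^ (2*k+1)) := by continuity
  have hp : (0:ℝ) ≤ (1+|c|) ^ (2*k+1) := by positivity
  have h1 : (fun v : ℝ => v + v ^ (2*k+1)) (-(1+|c|)) ≤ c := by
    have hodd : (-(1+|c|)) ^ (2*k+1) = -((1+|c|) ^ (2*k+1)) := Odd.neg_pow ⟨k, by ring⟩ _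
    simp only [hodd]
    have := neg_abs_le c
    nlinarith
  have h2 : c ≤ (fun v : ℝ => v + v ^ (2*k+1)) (1+|c|) := by
    simp only
    have := le_abs_self c
    nlinarith
  exact intermediate_value_univ (-(1+|c|)) (1+|c|) hcont ⟨h1, h2⟩

lemma bp_continuous (k : ℕ) (U : ℝ → ℝ)
    (hU : ∀ y : ℝ, U y + U y ^ (2 * k + 1) = -y) : Continuous U := by
  set e := StrictMono.orderIsoOfSurjective _ (bg_mono k) (bg_surj k) with he
  have hval : ∀ y, U y = e.symm (-y) := by
    intro y
    apply (bg_mono k).injective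
    show U y + U y ^ (2*k+1) = _
    rw [hU y]
    exact (StrictMono.orderIsoOfSurjective_self_symm_apply _ (bg_mono k) (bg_surj k) (-y)).symm
  have : U = fun y => e.symm (-y) := funext hval
  rw [this]
  exact e.symm.continuous.comp continuous_neg

lemma bp_hasDerivAt (k : ℕ) (U : ℝ → ℝ)
    (hU : ∀ y : ℝ, U y + U y ^ (2 * k + 1) = -y) (y : ℝ) :
    HasDerivAt U (-(1 + (2*(k:ℝ)+1) * U y ^ (2*k)))⁻¹ y := by
  have hcont := bp_continuous k U hU
  have hfg : ∀ z : ℝ, (fun v : ℝ => -(v + v ^ (2*k+1))) (U z) = z := by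
    intro z; simp only [hU z, neg_neg]
  have hf : HasDerivAt (fun v : ℝ => -(v + v ^ (2*k+1)))
      (-(1 + (2*(k:ℝ)+1) * U y ^ (2*k))) (U y) := by
    have h1 : HasDerivAt (fun v : ℝ => -(v + v ^ (2*k+1))) _ (U y) :=
      ((hasDerivAt_id (U y)).add (hasDerivAt_pow (2*k+1) (U y))).neg
    convert h1 using 1
    push_cast
    simp
  have hnn : (0:ℝ) ≤ U y ^ (2*k) := Even.pow_nonneg ⟨k, (two_mul k)⟩ _
  have hne : (-(1 + (2*(k:ℝ)+1) * U y ^ (2*k))) ≠ 0 := by nlinarith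
  exact hf.of_local_left_inverse hcont.continuousAt hne (Filter.Eventually.of_forall hfg)

lemma bp_zero (k : ℕ) (U : ℝ → ℝ)
    (hU : ∀ y : ℝ, U y + U y ^ (2 * k + 1) = -y) : U 0 = 0 := by
  apply (bg_mono k).injective
  show U 0 + U 0 ^ (2*k+1) = (0:ℝ) + 0 ^ (2*k+1)
  rw [hU 0]; simp

lemma bp_bound (k : ℕ) (U : ℝ → ℝ)
    (hU : ∀ y : ℝ, U y + U y ^ (2 * k + 1) = -y) (y : ℝ) :
    |U y| ≤ |y| ^ ((1:ℝ)/(2*(k:ℝ)+1)) := by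
  set v := U y with hv
  have key : |v| ^ (2*k+1) ≤ |y| := by
    have hy : |y| = |v + v ^ (2*k+1)| := by rw [hU y, abs_neg]
    rw [hy, ← abs_pow]
    rcases le_total 0 v with h | h
    · have h1 : (0:ℝ) ≤ v ^ (2*k+1) := pow_nonneg h _
      rw [abs_of_nonneg h1, abs_of_nonneg (by linarith)]
      linarith
    · have h1 : v ^ (2*k+1) ≤ 0 := Odd.pow_nonpos ⟨k, by ring⟩ h
      rw [abs_of_nonpos h1, abs_of_nonpos (by linarith)]
      linarith
  have hn : ((2*k+1 : ℕ) : ℝ) = 2*(k:ℝ)+1 := by push_cast; ring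
  have hpos : (0:ℝ) < 2*(k:ℝ)+1 := by positivity
  calc |v| = (|v| ^ (2*k+1)) ^ ((1:ℝ)/(2*(k:ℝ)+1)) := by
        rw [← Real.rpow_natCast |v| (2*k+1), ← Real.rpow_mul (abs_nonneg v), hn,
          mul_one_div, div_self hpos.ne', Real.rpow_one]
    _ ≤ |y| ^ ((1:ℝ)/(2*(k:ℝ)+1)) :=
        Real.rpow_le_rpow (by positivity) key (by positivity)

/-- With `λ = 1/(2k)` and `U_k` the implicit Burgers profile, the self-similar
ansatz `u(x,t) = (1-t)^λ U_k((1-t)^{-(1+λ)} x)` solves the inviscid Burgers equation on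
`ℝ × (-∞,1)`, satisfies the uniform bound `|u(x,t)| ≤ |x|^(1/(2k+1))`, and its spatial
gradient at the origin is `∂ₓu(0,t) = -(1-t)⁻¹`, which tends to `-∞` as `t → 1⁻`. -/
theorem implicit_burgers_selfSimilar_blowup
    (k : ℕ) (hk : 1 ≤ k) (lam : ℝ) (hlam : lam = 1 / (2 * (k : ℝ)))
    (U : ℝ → ℝ) (hU : ∀ y : ℝ, U y + U y ^ (2 * k + 1) = -y)
    (u : ℝ → ℝ → ℝ)
    (hu : ∀ x t : ℝ, u x t = (1 - t) ^ lam * U ((1 - t) ^ (-(1 + lam)) * x)) :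
    (∀ x t : ℝ, t < 1 →
        deriv (fun s => u x s) t + u x t * deriv (fun z => u z t) x = 0) ∧
      (∀ x t : ℝ, t < 1 → |u x t| ≤ |x| ^ ((1 : ℝ) / (2 * (k : ℝ) + 1))) ∧
      (∀ t : ℝ, t < 1 → deriv (fun z => u z t) 0 = -(1 - t)⁻¹) ∧
      Filter.Tendsto (fun t : ℝ => deriv (fun z => u z t) 0)
        (nhdsWithin 1 (Set.Iio 1)) Filter.atBot := by
  have hk1 : (1:ℝ) ≤ (k:ℝ) := by exact_mod_cast hk
  -- spatial derivative formula
  have hdx : ∀ x t : ℝ, t < 1 → deriv (fun z => u z t) x =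
      (1-t) ^ lam * ((-(1 + (2*(k:ℝ)+1) * U ((1-t) ^ (-(1+lam)) * x) ^ (2*k)))⁻¹
        * ((1-t) ^ (-(1+lam)) * 1)) := by
    intro x t ht
    have hfun : (fun z => u z t) = fun z => (1-t) ^ lam * U ((1-t) ^ (-(1+lam)) * z) :=
      funext fun z => hu z t
    rw [hfun]
    have h1 : HasDerivAt (fun z : ℝ => (1-t) ^ (-(1+lam)) * z) ((1-t) ^ (-(1+lam)) * 1) x :=
      (hasDerivAt_id x).const_mul _
    exact (((bp_hasDerivAt k U hU _).comp x h1).const_mul ((1-t) ^ lam)).deriv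
  -- part 3
  have part3 : ∀ t : ℝ, t < 1 → deriv (fun z => u z t) 0 = -(1 - t)⁻¹ := by
    intro t ht
    have hS : (0:ℝ) < 1 - t := by linarith
    have h0 : U ((1-t) ^ (-(1+lam)) * 0) = 0 := by rw [mul_zero, bp_zero k U hU]
    rw [hdx 0 t ht, h0, zero_pow (by omega : 2*k ≠ 0)]
    have hmul : (1-t) ^ lam * (1-t) ^ (-(1+lam)) = (1-t)⁻¹ := by
      rw [← Real.rpow_add hS, show lam + -(1+lam) = -1 by ring, Real.rpow_neg_one]
    rw [show -(1 + (2*(k:ℝ)+1) * 0) = -1 by ring]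
    linear_combination -hmul
  refine ⟨?_, ?_, part3, ?_⟩
  -- part 1: PDE
  · intro x t ht
    have hS : (0:ℝ) < 1 - t := by linarith
    set y : ℝ := (1-t) ^ (-(1+lam)) * x with hy
    set v : ℝ := U y with hv
    set A : ℝ := (1-t) ^ lam with hA
    have hApos : 0 < A := Real.rpow_pos_of_pos hS lam
    have hnn : (0:ℝ) ≤ v ^ (2*k) := Even.pow_nonneg ⟨k, (two_mul k)⟩ _
    have hD : (0:ℝ) < 1 + (2*(k:ℝ)+1) * v ^ (2*k) := by nlinarith
    -- time derivative
    have hdt : deriv (fun s => u x s) t =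
        (-1) * lam * (1-t) ^ (lam-1) * v
          + A * ((-(1 + (2*(k:ℝ)+1) * v ^ (2*k)))⁻¹
              * ((-1) * (-(1+lam)) * (1-t) ^ (-(1+lam)-1) * x)) := by
      have hfun : (fun s => u x s) = fun s => (1-s) ^ lam * U ((1-s) ^ (-(1+lam)) * x) :=
        funext fun s => hu x s
      rw [hfun]
      have hbase : HasDerivAt (fun s : ℝ => 1 - s) (-1) t := by
        simpa using (hasDerivAt_id t).const_sub 1
      have hA1 : HasDerivAt (fun s : ℝ => (1-s) ^ lam) ((-1) * lam * (1-t) ^ (lam-1)) t :=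
        hbase.rpow_const (Or.inl hS.ne')
      have hB1 : HasDerivAt (fun s : ℝ => (1-s) ^ (-(1+lam)))
          ((-1) * (-(1+lam)) * (1-t) ^ (-(1+lam)-1)) t :=
        hbase.rpow_const (Or.inl hS.ne')
      have hB2 := hB1.mul_const x
      have hy1 := (bp_hasDerivAt k U hU y).comp t hB2
      have hval := (hA1.mul hy1).deriv
      simp only [Function.comp_def, Pi.mul_def] at hval
      rw [hval, ← hy, ← hv]
    rw [hdt, hdx x t ht, hu x t, ← hy, ← hv, ← hA]
    -- rpow algebra
    have e1 : (1-t) ^ (lam-1) = A / (1-t) := by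
      rw [Real.rpow_sub hS, Real.rpow_one]
    have e2 : (1-t) ^ (-(1+lam)) = (A * (1-t))⁻¹ := by
      rw [Real.rpow_neg hS.le, Real.rpow_add hS, Real.rpow_one, mul_comm]
    have e3 : (1-t) ^ (-(1+lam)-1) = (A * (1-t)^2)⁻¹ := by
      rw [Real.rpow_sub hS, Real.rpow_one, e2]
      field_simp
    have hxv : x = -(A * (1-t) * (v + v ^ (2*k+1))) := by
      have h := hU y
      rw [← hv] at h
      rw [h, hy, e2]
      field_simp
    rw [e1, e2, e3, hxv]
    rw [pow_succ v (2*k)]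
    have hDw : (0:ℝ) < 1 + (2*(k:ℝ)+1) * v ^ (2*k) := hD
    -- make atoms
    generalize hw : v ^ (2*k) = w at hnn hD ⊢
    generalize hSg : 1 - t = S at hS hApos ⊢
    have hK : (0:ℝ) < (k:ℝ) := by linarith
    subst hlam
    have h2k : (2*(k:ℝ)) ≠ 0 := by positivity
    rw [inv_neg]
    field_simp [hApos.ne', hS.ne', hD.ne', h2k]
    ring
  -- part 2: bound
  · intro x t ht
    have hS : (0:ℝ) < 1 - t := by linarith
    have hK : (0:ℝ) < (k:ℝ) := by linarith
    have hBpos : (0:ℝ) < (1-t) ^ (-(1+lam)) := Real.rpow_pos_of_pos hS _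
    rw [hu x t, abs_mul, abs_of_pos (Real.rpow_pos_of_pos hS lam)]
    calc (1-t) ^ lam * |U ((1-t) ^ (-(1+lam)) * x)|
        ≤ (1-t) ^ lam * |(1-t) ^ (-(1+lam)) * x| ^ ((1:ℝ)/(2*(k:ℝ)+1)) :=
          mul_le_mul_of_nonneg_left (bp_bound k U hU _) (Real.rpow_pos_of_pos hS lam).le
      _ = |x| ^ ((1:ℝ)/(2*(k:ℝ)+1)) := by
          rw [abs_mul, abs_of_pos hBpos, Real.mul_rpow hBpos.le (abs_nonneg x),
            ← Real.rpow_mul hS.le, ← mul_assoc, ← Real.rpow_add hS,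
            show lam + -(1+lam) * ((1:ℝ)/(2*(k:ℝ)+1)) = 0 by
              rw [hlam]; field_simp; ring,
            Real.rpow_zero, one_mul]
  -- part 4: blow-up
  · have h1 : Tendsto (fun t : ℝ => 1 - t) (nhdsWithin 1 (Set.Iio 1))
        (nhdsWithin 0 (Set.Ioi 0)) := by
      apply tendsto_nhdsWithin_of_tendsto_nhds_of_eventually_within
      · have h : Tendsto (fun t : ℝ => 1 - t) (nhds 1) (nhds 0) := by
          have hc : Continuous (fun t : ℝ => 1 - t) := by continuity
          have := hc.tendsto (1:ℝ)
          simpa using this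
        exact h.mono_left nhdsWithin_le_nhds
      · filter_upwards [self_mem_nhdsWithin] with t ht
        simp only [Set.mem_Iio] at ht
        simpa using ht
    have h2 : Tendsto (fun t : ℝ => -(1 - t)⁻¹) (nhdsWithin 1 (Set.Iio 1)) atBot :=
      tendsto_neg_atTop_atBot.comp (tendsto_inv_nhdsGT_zero.comp h1)
    apply h2.congr'
    filter_upwards [self_mem_nhdsWithin] with t ht
    exact (part3 t ht).symm
end
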